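/- Let K_w ∈ ℝ^{N×N} and K_h ∈ ℝ^{L×L} be symmetric positive semidefinite kernel matrices whose eigenvalues are all at most λ_max > 0, fix p ≥ 1 and t_B > 0, and define the KMC hypothesis class F_K = { F ∈ ℝ^{N×L} : F = K_w B Cᵀ K_h for some B ∈ ℝ^{N×p}, C ∈ ℝ^{L×p} with trace(Bᵀ K_w B) + trace(Cᵀ K_h C) ≤ t_B }. Suppose that G > 0 is a constant such that for every t > 0 the nuclear-norm-ball class F_MC(t) = { F ∈ ℝ^{N×L} : ‖F‖_* ≤ t } satisfies R_n(F_MC(t)) ≤ G·q·t·(√N + √L). Then R_n(F_K) ≤ λ_max·G·q·t_B·(√N + √L). -/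

import Mathlib

open Matrix

/-- The nuclear norm of a real `N × L` matrix `F`: the trace of the positive semidefinite
square root of `Fᵀ F` (equivalently, the sum of the singular values of `F`). -/
noncomputable def nuclearNorm {N L : ℕ} (F : Matrix (Fin N) (Fin L) ℝ) : ℝ :=
  (let hA := Matrix.posSemidef_conjTranspose_mul_self F
   (hA.1.eigenvectorUnitary : Matrix (Fin L) (Fin L) ℝ) *
     diagonal ((RCLike.ofReal : ℝ → ℝ) ∘ Real.sqrt ∘ hA.1.eigenvalues) *
     (star hA.1.eigenvectorUnitary : Matrix (Fin L) (Fin L) ℝ)).trace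

/-- The transductive Rademacher complexity of a class `C` of real `N × L` matrices, for a set
`S_n` of index pairs and `q = 1/m + 1/u`:
`R_n(C) = q · E_σ [sup_{F∈C} ∑_{(i,j)∈S_n} σ_{ij} F_{ij}]`, where the `σ_{ij}`, `(i,j) ∈ S_n`,
are i.i.d. uniform on `{−1,+1}` (the expectation is the average over all `2^{NL}` sign
patterns). -/
noncomputable def TRC {N L : ℕ} (q : ℝ) (Sn : Finset (Fin N × Fin L))
    (C : Set (Matrix (Fin N) (Fin L) ℝ)) : ℝ :=
  q * ((∑ ε : Fin N × Fin L → Bool,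
      sSup ((fun F => ∑ p ∈ Sn, (if ε p then (1 : ℝ) else -1) * F p.1 p.2) '' C)) / 2 ^ (N * L))


lemma psd_trace_nonneg {n : Type*} [Fintype n] {M : Matrix n n ℝ} (h : M.PosSemidef) :
    0 ≤ M.trace := by
  exact h.trace_nonneg

open scoped MatrixOrder in
lemma psd_sqrt_exists {n : Type*} [Fintype n] [DecidableEq n] {W : Matrix n n ℝ}
    (hW : W.PosSemidef) : ∃ S : Matrix n n ℝ, S * S = W ∧ Sᴴ = S := by
  have h0 : 0 ≤ W := Matrix.nonneg_iff_posSemidef.mpr hW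
  exact ⟨CFC.sqrt W, CFC.sqrt_mul_sqrt_self W h0,
    (Matrix.nonneg_iff_posSemidef.mp (CFC.sqrt_nonneg W)).1⟩

lemma psd_trace_mul_nonneg {n : Type*} [Fintype n] [DecidableEq n] {M W : Matrix n n ℝ}
    (hM : M.PosSemidef) (hW : W.PosSemidef) : 0 ≤ (M * W).trace := by
  obtain ⟨S, hSS, hSH⟩ := psd_sqrt_exists hW
  have h1 : M * W = (M * S) * S := by rw [mul_assoc, hSS]
  rw [h1, trace_mul_comm]
  have h2 : S * (M * S) = S * M * (S)ᴴ := by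
    rw [hSH, mul_assoc]
  rw [h2]
  exact psd_trace_nonneg (hM.mul_mul_conjTranspose_same _)

lemma trace_transpose_mul_le {a b : Type*} [Fintype a] [Fintype b] (P Q : Matrix a b ℝ) :
    (Pᵀ * Q).trace ≤ ((Pᵀ * P).trace + (Qᵀ * Q).trace) / 2 := by
  have h : ∀ (R S : Matrix a b ℝ), (Rᵀ * S).trace = ∑ j : b, ∑ k : a, R k j * S k j := by
    intro R S
    simp [Matrix.trace, Matrix.diag, Matrix.mul_apply, Matrix.transpose_apply]
  rw [h, h, h]
  calc ∑ j : b, ∑ k : a, P k j * Q k j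
      ≤ ∑ j : b, ∑ k : a, (P k j * P k j + Q k j * Q k j) / 2 := by
        refine Finset.sum_le_sum fun j _ => Finset.sum_le_sum fun k _ => ?_
        nlinarith [sq_nonneg (P k j - Q k j)]
    _ = (∑ j : b, ∑ k : a, P k j * P k j + ∑ j : b, ∑ k : a, Q k j * Q k j) / 2 := by
        simp [← Finset.sum_div, Finset.sum_add_distrib]

lemma abstract_core {N L p : ℕ} (F : Matrix (Fin N) (Fin L) ℝ)
    (X : Matrix (Fin N) (Fin p) ℝ) (Y : Matrix (Fin L) (Fin p) ℝ)
    (V : Matrix (Fin L) (Fin L) ℝ) (lam : Fin L → ℝ)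
    (hF : F = X * Yᵀ) (hl : ∀ j, 0 ≤ lam j)
    (hV2 : V * Vᵀ = 1)
    (e1 : Vᵀ * (Fᵀ * F) * V = diagonal lam) :
    ∑ j, Real.sqrt (lam j) ≤ ((Xᵀ * X).trace + (Yᵀ * Y).trace) / 2 := by
  classical
  obtain ⟨D, hD⟩ : ∃ D : Matrix (Fin L) (Fin L) ℝ,
      D = diagonal (fun j => (Real.sqrt (lam j))⁻¹) := ⟨_, rfl⟩
  obtain ⟨U, hU⟩ : ∃ U : Matrix (Fin N) (Fin L) ℝ, U = F * V * D := ⟨_, rfl⟩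
  have hWW : (F * V)ᵀ * (F * V) = diagonal lam := by
    rw [transpose_mul]
    calc Vᵀ * Fᵀ * (F * V) = Vᵀ * (Fᵀ * F) * V := by simp only [Matrix.mul_assoc]
    _ = diagonal lam := e1
  have hUt : Uᵀ = D * (F * V)ᵀ := by
    rw [hU, transpose_mul, hD, diagonal_transpose]
  have hUtU : Uᵀ * U = diagonal (fun j => (Real.sqrt (lam j))⁻¹ * lam j * (Real.sqrt (lam j))⁻¹) := by
    rw [hUt, hU]
    calc D * (F * V)ᵀ * (F * V * D) = D * ((F * V)ᵀ * (F * V)) * D := by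
          simp only [Matrix.mul_assoc]
      _ = D * diagonal lam * D := by rw [hWW]
      _ = _ := by rw [hD, diagonal_mul_diagonal, diagonal_mul_diagonal]
  have hUE : U * (Uᵀ * U) = U := by
    rw [hUtU, hU]
    calc F * V * D * diagonal (fun j => (Real.sqrt (lam j))⁻¹ * lam j * (Real.sqrt (lam j))⁻¹)
        = F * V * (D * diagonal (fun j => (Real.sqrt (lam j))⁻¹ * lam j * (Real.sqrt (lam j))⁻¹)) := by
          simp only [Matrix.mul_assoc]
      _ = F * V * D := by
          congr 1
          rw [hD, diagonal_mul_diagonal]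
          refine congrArg diagonal (funext fun j => ?_)
          rcases (hl j).eq_or_lt with h | h
          · rw [← h]; norm_num
          · have hs : Real.sqrt (lam j) ≠ 0 := ne_of_gt (Real.sqrt_pos.mpr h)
            have hm : Real.sqrt (lam j) * Real.sqrt (lam j) = lam j := Real.mul_self_sqrt (hl j)
            field_simp
            exact (Real.sq_sqrt (hl j)).symm
  have hP : (1 - U * Uᵀ).PosSemidef := by
    have hidem : (U * Uᵀ) * (U * Uᵀ) = U * Uᵀ := by
      calc U * Uᵀ * (U * Uᵀ) = U * (Uᵀ * U) * Uᵀ := by simp only [Matrix.mul_assoc]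
        _ = U * Uᵀ := by rw [← Matrix.mul_assoc] at hUE ⊢; rw [hUE]
    have h2 : (1 - U * Uᵀ)ᴴ * (1 - U * Uᵀ) = 1 - U * Uᵀ := by
      have hsym : (U * Uᵀ)ᵀ = U * Uᵀ := by rw [transpose_mul, transpose_transpose]
      rw [conjTranspose_eq_transpose_of_trivial, transpose_sub, transpose_one, hsym]
      rw [Matrix.sub_mul, Matrix.mul_sub, Matrix.mul_sub, hidem]
      simp
    rw [← h2]
    exact posSemidef_conjTranspose_mul_self _
  have htr : (Uᵀ * F * V).trace = ∑ j, Real.sqrt (lam j) := by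
    have h3 : Uᵀ * F * V = D * (Vᵀ * (Fᵀ * F) * V) := by
      rw [hUt, transpose_mul]
      simp only [Matrix.mul_assoc]
    rw [h3, e1, hD, diagonal_mul_diagonal, trace_diagonal]
    refine Finset.sum_congr rfl fun j _ => ?_
    rcases (hl j).eq_or_lt with h | h
    · rw [← h]; norm_num
    · have hs : Real.sqrt (lam j) ≠ 0 := ne_of_gt (Real.sqrt_pos.mpr h)
      have hm : Real.sqrt (lam j) * Real.sqrt (lam j) = lam j := Real.mul_self_sqrt (hl j)
      field_simp
      exact (Real.sq_sqrt (hl j)).symm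
  have step4 : Uᵀ * F * V = (Xᵀ * U)ᵀ * (Yᵀ * V) := by
    rw [transpose_mul, transpose_transpose, hF]
    simp only [Matrix.mul_assoc]
  have hQ : ((Yᵀ * V)ᵀ * (Yᵀ * V)).trace = (Yᵀ * Y).trace := by
    rw [transpose_mul, transpose_transpose]
    calc (Vᵀ * Y * (Yᵀ * V)).trace = (Vᵀ * (Y * Yᵀ) * V).trace := by
          simp only [Matrix.mul_assoc]
      _ = (V * Vᵀ * (Y * Yᵀ)).trace := by rw [trace_mul_cycle]
      _ = (Yᵀ * Y).trace := by rw [hV2, one_mul, trace_mul_comm]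
  have hPP : ((Xᵀ * U)ᵀ * (Xᵀ * U)).trace ≤ (Xᵀ * X).trace := by
    rw [transpose_mul, transpose_transpose]
    have h1 : Uᵀ * X * (Xᵀ * U) = Uᵀ * (X * Xᵀ) * U := by simp only [Matrix.mul_assoc]
    rw [h1]
    have e : (Xᵀ * X).trace - (Uᵀ * (X * Xᵀ) * U).trace = ((X * Xᵀ) * (1 - U * Uᵀ)).trace := by
      rw [Matrix.mul_sub, Matrix.mul_one, trace_sub]
      congr 1
      · rw [trace_mul_comm]
      · rw [trace_mul_cycle, trace_mul_comm, Matrix.mul_assoc]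
    have pos : 0 ≤ ((X * Xᵀ) * (1 - U * Uᵀ)).trace := by
      have hXX : (X * Xᵀ).PosSemidef := by
        have := posSemidef_self_mul_conjTranspose X
        rwa [conjTranspose_eq_transpose_of_trivial] at this
      exact psd_trace_mul_nonneg hXX hP
    linarith
  calc ∑ j, Real.sqrt (lam j) = ((Xᵀ * U)ᵀ * (Yᵀ * V)).trace := by rw [← htr, step4]
    _ ≤ (((Xᵀ * U)ᵀ * (Xᵀ * U)).trace + ((Yᵀ * V)ᵀ * (Yᵀ * V)).trace) / 2 :=
        trace_transpose_mul_le _ _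
    _ ≤ ((Xᵀ * X).trace + (Yᵀ * Y).trace) / 2 := by
        rw [hQ]; linarith


lemma nuclearNorm_eq_sum {N L : ℕ} (F : Matrix (Fin N) (Fin L) ℝ) :
    nuclearNorm F = ∑ j, Real.sqrt ((Matrix.posSemidef_conjTranspose_mul_self F).1.eigenvalues j) := by
  have h1 : star ((Matrix.posSemidef_conjTranspose_mul_self F).1.eigenvectorUnitary : Matrix (Fin L) (Fin L) ℝ) *
      ((Matrix.posSemidef_conjTranspose_mul_self F).1.eigenvectorUnitary : Matrix (Fin L) (Fin L) ℝ) = 1 :=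
    mem_unitaryGroup_iff'.mp (Matrix.posSemidef_conjTranspose_mul_self F).1.eigenvectorUnitary.2
  rw [nuclearNorm]; dsimp only; rw [trace_mul_cycle, h1, one_mul, trace_diagonal]
  simp [RCLike.ofReal_real_eq_id]

lemma aux_VVt {N L : ℕ} (F : Matrix (Fin N) (Fin L) ℝ) :
    ((Matrix.posSemidef_conjTranspose_mul_self F).1.eigenvectorUnitary : Matrix (Fin L) (Fin L) ℝ) *
      ((Matrix.posSemidef_conjTranspose_mul_self F).1.eigenvectorUnitary : Matrix (Fin L) (Fin L) ℝ)ᵀ = 1 := by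
  have hstar : star ((Matrix.posSemidef_conjTranspose_mul_self F).1.eigenvectorUnitary : Matrix (Fin L) (Fin L) ℝ)
      = ((Matrix.posSemidef_conjTranspose_mul_self F).1.eigenvectorUnitary : Matrix (Fin L) (Fin L) ℝ)ᵀ := by
    rw [Matrix.star_eq_conjTranspose, conjTranspose_eq_transpose_of_trivial]
  have := mem_unitaryGroup_iff.mp (Matrix.posSemidef_conjTranspose_mul_self F).1.eigenvectorUnitary.2
  rwa [hstar] at this

lemma aux_diag {N L : ℕ} (F : Matrix (Fin N) (Fin L) ℝ) :
    ((Matrix.posSemidef_conjTranspose_mul_self F).1.eigenvectorUnitary : Matrix (Fin L) (Fin L) ℝ)ᵀ *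
      (Fᵀ * F) * ((Matrix.posSemidef_conjTranspose_mul_self F).1.eigenvectorUnitary : Matrix (Fin L) (Fin L) ℝ)
      = diagonal ((Matrix.posSemidef_conjTranspose_mul_self F).1.eigenvalues) := by
  have hstar : star ((Matrix.posSemidef_conjTranspose_mul_self F).1.eigenvectorUnitary : Matrix (Fin L) (Fin L) ℝ)
      = ((Matrix.posSemidef_conjTranspose_mul_self F).1.eigenvectorUnitary : Matrix (Fin L) (Fin L) ℝ)ᵀ := by
    rw [Matrix.star_eq_conjTranspose, conjTranspose_eq_transpose_of_trivial]
  have h := (Matrix.posSemidef_conjTranspose_mul_self F).1.conjStarAlgAut_star_eigenvectorUnitary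
  rw [Unitary.conjStarAlgAut_star_apply] at h
  rw [hstar] at h
  rw [← conjTranspose_eq_transpose_of_trivial F]
  simpa [RCLike.ofReal_real_eq_id] using h


lemma entry_core {N L : ℕ} (F : Matrix (Fin N) (Fin L) ℝ)
    (V : Matrix (Fin L) (Fin L) ℝ) (lam : Fin L → ℝ) (hl : ∀ k, 0 ≤ lam k)
    (hVVt : V * Vᵀ = 1) (hdiag : Vᵀ * (Fᵀ * F) * V = diagonal lam) (i : Fin N) (j : Fin L) :
    |F i j| ≤ ∑ k, Real.sqrt (lam k) := by
  classical
  have hS : 0 ≤ ∑ k, Real.sqrt (lam k) := Finset.sum_nonneg fun k _ => Real.sqrt_nonneg _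
  have hAjj : (Fᵀ * F) j j = ∑ k, lam k * (V j k)^2 := by
    have h1 : Fᵀ * F = V * diagonal lam * Vᵀ := by
      rw [← hdiag]
      calc Fᵀ * F = (V * Vᵀ) * (Fᵀ * F) * (V * Vᵀ) := by rw [hVVt]; simp
        _ = V * (Vᵀ * (Fᵀ * F) * V) * Vᵀ := by simp only [Matrix.mul_assoc]
    rw [h1]
    simp only [Matrix.mul_apply, Matrix.diagonal_apply, Matrix.transpose_apply,
      mul_ite, mul_zero, Finset.sum_ite_eq', Finset.mem_univ, if_true]
    refine Finset.sum_congr rfl fun k _ => by ring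
  have hFij : (F i j)^2 ≤ (Fᵀ * F) j j := by
    have h2 : (Fᵀ * F) j j = ∑ k, (F k j)^2 := by
      simp [Matrix.mul_apply, Matrix.transpose_apply, pow_two]
    rw [h2]
    exact Finset.single_le_sum (f := fun k => (F k j)^2) (fun k _ => sq_nonneg _)
      (Finset.mem_univ i)
  have hVjj : ∑ k, (V j k)^2 = 1 := by
    have h3 : (V * Vᵀ) j j = (1 : Matrix (Fin L) (Fin L) ℝ) j j := by rw [hVVt]
    simpa [Matrix.mul_apply, Matrix.transpose_apply, Matrix.one_apply, pow_two] using h3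
  have hlamle : ∀ k, lam k ≤ (∑ k', Real.sqrt (lam k'))^2 := by
    intro k
    have h1 : Real.sqrt (lam k) ≤ ∑ k', Real.sqrt (lam k') :=
      Finset.single_le_sum (fun k' _ => Real.sqrt_nonneg _) (Finset.mem_univ k)
    have h4 := pow_le_pow_left₀ (Real.sqrt_nonneg (lam k)) h1 2
    rwa [Real.sq_sqrt (hl k)] at h4
  have hbound : (F i j)^2 ≤ (∑ k, Real.sqrt (lam k))^2 := by
    calc (F i j)^2 ≤ (Fᵀ * F) j j := hFij
      _ = ∑ k, lam k * (V j k)^2 := hAjj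
      _ ≤ ∑ k, (∑ k', Real.sqrt (lam k'))^2 * (V j k)^2 := by
          refine Finset.sum_le_sum fun k _ => ?_
          exact mul_le_mul_of_nonneg_right (hlamle k) (sq_nonneg _)
      _ = (∑ k', Real.sqrt (lam k'))^2 := by rw [← Finset.mul_sum, hVjj, mul_one]
  calc |F i j| = Real.sqrt ((F i j)^2) := (Real.sqrt_sq_eq_abs _).symm
    _ ≤ Real.sqrt ((∑ k, Real.sqrt (lam k))^2) := Real.sqrt_le_sqrt hbound
    _ = ∑ k, Real.sqrt (lam k) := Real.sqrt_sq hS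

lemma nuclearNorm_nonneg' {N L : ℕ} (F : Matrix (Fin N) (Fin L) ℝ) : 0 ≤ nuclearNorm F := by
  rw [nuclearNorm_eq_sum]
  exact Finset.sum_nonneg fun j _ => Real.sqrt_nonneg _

lemma abs_entry_le_nuclearNorm {N L : ℕ} (F : Matrix (Fin N) (Fin L) ℝ) (i : Fin N) (j : Fin L) :
    |F i j| ≤ nuclearNorm F := by
  rw [nuclearNorm_eq_sum]
  exact entry_core F _ _ (Matrix.posSemidef_conjTranspose_mul_self F).eigenvalues_nonneg
    (aux_VVt F) (aux_diag F) i j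

lemma nuclearNorm_factor_le {N L p : ℕ} (X : Matrix (Fin N) (Fin p) ℝ)
    (Y : Matrix (Fin L) (Fin p) ℝ) :
    nuclearNorm (X * Yᵀ) ≤ ((Xᵀ * X).trace + (Yᵀ * Y).trace) / 2 := by
  rw [nuclearNorm_eq_sum]
  exact abstract_core (X * Yᵀ) X Y _ _ rfl
    (Matrix.posSemidef_conjTranspose_mul_self (X * Yᵀ)).eigenvalues_nonneg
    (aux_VVt _) (aux_diag _)

lemma kernel_sq_trace {n r : ℕ} (K : Matrix (Fin n) (Fin n) ℝ) (hK : K.PosSemidef) (lam : ℝ)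
    (hKl : (lam • (1 : Matrix (Fin n) (Fin n) ℝ) - K).PosSemidef)
    (B : Matrix (Fin n) (Fin r) ℝ) :
    (Bᵀ * (K * K) * B).trace ≤ lam * (Bᵀ * K * B).trace := by
  obtain ⟨S, hR, hRsym⟩ := psd_sqrt_exists hK
  have hM : lam • K - K * K = S * (lam • (1 : Matrix (Fin n) (Fin n) ℝ) - K) * (S)ᴴ := by
    rw [hRsym, Matrix.mul_sub, Matrix.sub_mul]
    congr 1
    · rw [Matrix.mul_smul, Matrix.mul_one, Matrix.smul_mul, hR]
    · calc K * K = (S * S) * (S * S) := by rw [hR]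
        _ = S * (S * S) * S := by simp only [Matrix.mul_assoc]
        _ = S * K * S := by rw [hR]
  have hMpsd : (lam • K - K * K).PosSemidef := by
    rw [hM]; exact hKl.mul_mul_conjTranspose_same _
  have hconj : (Bᵀ * (lam • K - K * K) * B).PosSemidef := by
    have := hMpsd.conjTranspose_mul_mul_same B
    rwa [conjTranspose_eq_transpose_of_trivial] at this
  have htr := psd_trace_nonneg hconj
  have hexp : (Bᵀ * (lam • K - K * K) * B).trace
      = lam * (Bᵀ * K * B).trace - (Bᵀ * (K * K) * B).trace := by
    rw [Matrix.mul_sub, Matrix.sub_mul, trace_sub, Matrix.mul_smul, Matrix.smul_mul, trace_smul]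
    simp [smul_eq_mul]
  rw [hexp] at htr
  linarith

lemma psd_conj_trace_nonneg {n r : ℕ} {K : Matrix (Fin n) (Fin n) ℝ} (hK : K.PosSemidef)
    (B : Matrix (Fin n) (Fin r) ℝ) : 0 ≤ (Bᵀ * K * B).trace := by
  have := hK.conjTranspose_mul_mul_same B
  rw [conjTranspose_eq_transpose_of_trivial] at this
  exact psd_trace_nonneg this

/-- Let `K_w ∈ ℝ^{N×N}`, `K_h ∈ ℝ^{L×L}` be symmetric positive semidefinite
kernel matrices whose eigenvalues are all at most `λ_max > 0` (expressed as `λ_max • 1 - K`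
being positive semidefinite), fix `p ≥ 1` and `t_B > 0`, and let `F_K` be the KMC hypothesis
class of matrices `K_w B Cᵀ K_h` with `trace(Bᵀ K_w B) + trace(Cᵀ K_h C) ≤ t_B`.  If `G > 0` is
such that for every `t > 0` the nuclear-norm ball `{F : ‖F‖_* ≤ t}` has transductive Rademacher
complexity at most `G q t (√N + √L)`, then
`R_n(F_K) ≤ λ_max G q t_B (√N + √L)`. -/
theorem trc_kmc_le {N L : ℕ} (m u : ℕ) (hm : 1 ≤ m) (hu : 1 ≤ u)
    (Sn : Finset (Fin N × Fin L)) (hSn : Sn.card = m + u)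
    (q : ℝ) (hq : q = 1 / m + 1 / u)
    (Kw : Matrix (Fin N) (Fin N) ℝ) (Kh : Matrix (Fin L) (Fin L) ℝ)
    (hKw : Kw.PosSemidef) (hKh : Kh.PosSemidef)
    (lamMax : ℝ) (hlam : 0 < lamMax)
    (hKwlam : (lamMax • (1 : Matrix (Fin N) (Fin N) ℝ) - Kw).PosSemidef)
    (hKhlam : (lamMax • (1 : Matrix (Fin L) (Fin L) ℝ) - Kh).PosSemidef)
    (p : ℕ) (hp : 1 ≤ p) (tB : ℝ) (htB : 0 < tB)
    (G : ℝ) (hG : 0 < G)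
    (hMC : ∀ t > (0 : ℝ), TRC q Sn {F : Matrix (Fin N) (Fin L) ℝ | nuclearNorm F ≤ t} ≤
      G * q * t * (Real.sqrt N + Real.sqrt L)) :
    TRC q Sn {F : Matrix (Fin N) (Fin L) ℝ |
        ∃ (B : Matrix (Fin N) (Fin p) ℝ) (C : Matrix (Fin L) (Fin p) ℝ),
          F = Kw * B * Cᵀ * Kh ∧ (Bᵀ * Kw * B).trace + (Cᵀ * Kh * C).trace ≤ tB} ≤
      lamMax * G * q * tB * (Real.sqrt N + Real.sqrt L) := by

  have hq0 : 0 ≤ q := by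
    rw [hq]; positivity
  have ht0 : 0 < lamMax * tB := mul_pos hlam htB
  set FK : Set (Matrix (Fin N) (Fin L) ℝ) := {F : Matrix (Fin N) (Fin L) ℝ |
      ∃ (B : Matrix (Fin N) (Fin p) ℝ) (C : Matrix (Fin L) (Fin p) ℝ),
        F = Kw * B * Cᵀ * Kh ∧ (Bᵀ * Kw * B).trace + (Cᵀ * Kh * C).trace ≤ tB} with hFK
  set ball : Set (Matrix (Fin N) (Fin L) ℝ) :=
    {F : Matrix (Fin N) (Fin L) ℝ | nuclearNorm F ≤ lamMax * tB} with hball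
  have hKhT : Khᵀ = Kh := by
    have h := hKh.1.eq
    rwa [conjTranspose_eq_transpose_of_trivial] at h
  have hKwT : Kwᵀ = Kw := by
    have h := hKw.1.eq
    rwa [conjTranspose_eq_transpose_of_trivial] at h
  have hsub : FK ⊆ ball := by
    rintro F ⟨B, C, rfl, hBC⟩
    show nuclearNorm (Kw * B * Cᵀ * Kh) ≤ lamMax * tB
    have hXY : Kw * B * Cᵀ * Kh = (Kw * B) * (Kh * C)ᵀ := by
      rw [transpose_mul, hKhT]
      simp only [Matrix.mul_assoc]
    have h2 : nuclearNorm ((Kw * B) * (Kh * C)ᵀ)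
        ≤ (((Kw * B)ᵀ * (Kw * B)).trace + ((Kh * C)ᵀ * (Kh * C)).trace) / 2 :=
      nuclearNorm_factor_le _ _
    have h3 : ((Kw * B)ᵀ * (Kw * B)).trace ≤ lamMax * (Bᵀ * Kw * B).trace := by
      have e : (Kw * B)ᵀ * (Kw * B) = Bᵀ * (Kw * Kw) * B := by
        rw [transpose_mul, hKwT]
        simp only [Matrix.mul_assoc]
      rw [e]
      exact kernel_sq_trace Kw hKw lamMax hKwlam B
    have h4 : ((Kh * C)ᵀ * (Kh * C)).trace ≤ lamMax * (Cᵀ * Kh * C).trace := by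
      have e : (Kh * C)ᵀ * (Kh * C) = Cᵀ * (Kh * Kh) * C := by
        rw [transpose_mul, hKhT]
        simp only [Matrix.mul_assoc]
      rw [e]
      exact kernel_sq_trace Kh hKh lamMax hKhlam C
    have h7 : (Bᵀ * Kw * B).trace + (Cᵀ * Kh * C).trace ≤ tB := hBC
    have h8 : lamMax * ((Bᵀ * Kw * B).trace + (Cᵀ * Kh * C).trace) ≤ lamMax * tB :=
      mul_le_mul_of_nonneg_left h7 hlam.le
    rw [hXY]
    calc nuclearNorm ((Kw * B) * (Kh * C)ᵀ)
        ≤ (((Kw * B)ᵀ * (Kw * B)).trace + ((Kh * C)ᵀ * (Kh * C)).trace) / 2 := h2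
      _ ≤ (lamMax * (Bᵀ * Kw * B).trace + lamMax * (Cᵀ * Kh * C).trace) / 2 := by linarith
      _ ≤ (lamMax * tB) / 2 := by rw [mul_add] at h8; linarith
      _ ≤ lamMax * tB := by linarith
  have h0FK : (0 : Matrix (Fin N) (Fin L) ℝ) ∈ FK := by
    refine ⟨0, 0, by simp, ?_⟩
    simp [htB.le]
  have hmono : TRC q Sn FK ≤ TRC q Sn ball := by
    rw [TRC, TRC]
    have hsum : ∀ ε : Fin N × Fin L → Bool,
        sSup ((fun F => ∑ pr ∈ Sn, (if ε pr then (1 : ℝ) else -1) * F pr.1 pr.2) '' FK)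
        ≤ sSup ((fun F => ∑ pr ∈ Sn, (if ε pr then (1 : ℝ) else -1) * F pr.1 pr.2) '' ball) := by
      intro ε
      refine csSup_le_csSup ?_ ?_ (Set.image_mono hsub)
      · refine ⟨(Sn.card : ℝ) * (lamMax * tB), ?_⟩
        rintro y ⟨F, hF, rfl⟩
        calc ∑ pr ∈ Sn, (if ε pr then (1 : ℝ) else -1) * F pr.1 pr.2
            ≤ ∑ pr ∈ Sn, (lamMax * tB) := by
              refine Finset.sum_le_sum fun pr _ => ?_
              have habs : |F pr.1 pr.2| ≤ lamMax * tB :=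
                le_trans (abs_entry_le_nuclearNorm F pr.1 pr.2) hF
              have : (if ε pr then (1 : ℝ) else -1) * F pr.1 pr.2 ≤ |F pr.1 pr.2| := by
                split_ifs
                · rw [one_mul]; exact le_abs_self _
                · rw [neg_one_mul]; exact neg_le_abs _
              linarith
          _ = (Sn.card : ℝ) * (lamMax * tB) := by
              rw [Finset.sum_const, nsmul_eq_mul]
      · exact ⟨_, Set.mem_image_of_mem _ h0FK⟩
    have h2 : (0:ℝ) < (2:ℝ)^(N*L) := by positivity
    refine mul_le_mul_of_nonneg_left ?_ hq0
    rw [div_le_div_iff_of_pos_right h2]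
    exact Finset.sum_le_sum fun ε _ => hsum ε
  calc TRC q Sn FK ≤ TRC q Sn ball := hmono
    _ ≤ G * q * (lamMax * tB) * (Real.sqrt N + Real.sqrt L) := hMC _ ht0
    _ = lamMax * G * q * tB * (Real.sqrt N + Real.sqrt L) := by ring
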